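/- Let K be a nonempty compact connected subset of the Euclidean plane, and set x⁻ = inf{x(p) : p ∈ K}, x⁺ = sup{x(p) : p ∈ K}, y⁻ = inf{y(p) : p ∈ K}, y⁺ = sup{y(p) : p ∈ K}. Let γ : [0,1] → ℝ² be a continuous path whose image is disjoint from K and which satisfies x(γ(0)) < x⁻ and x(γ(1)) > x⁺. Then there exists τ ∈ [0,1] with x⁻ ≤ x(γ(τ)) ≤ x⁺ and either y(γ(τ)) ≥ y⁺ or y(γ(τ)) ≤ y⁻. -/

import Mathlib

open Complex Real Set Metric

lemma two_pi_int_zero (S : ℝ) (h : Complex.exp (S * Complex.I) = 1) (hb : |S| < 2 * π) :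
    S = 0 := by
  rw [Complex.exp_eq_one_iff] at h
  obtain ⟨n, hn⟩ := h
  have hI : (Complex.I : ℂ) ≠ 0 := Complex.I_ne_zero
  have h0 : (S : ℂ) * Complex.I = ((n : ℂ) * (2 * π)) * Complex.I := by rw [hn]; ring
  have h1 : (S : ℂ) = (n : ℂ) * (2 * π) := mul_right_cancel₀ hI h0
  have hS : S = n * (2 * π) := by exact_mod_cast h1
  have hb' : |(n : ℝ)| * (2 * π) < 2 * π := by
    rw [hS, abs_mul, abs_of_pos (by positivity : (0:ℝ) < 2 * π)] at hb
    exact hb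
  have h2 : |(n:ℝ)| < 1 := by nlinarith [Real.pi_pos]
  rw [abs_lt] at h2
  have h3 : n = 0 := by
    have hl : (-1 : ℤ) < n := by exact_mod_cast h2.1
    have hr : n < (1 : ℤ) := by exact_mod_cast h2.2
    omega
  simp [hS, h3]

lemma exp_arg_mul_I (z : ℂ) (hz : z ≠ 0) : Complex.exp (z.arg * Complex.I) = z / ‖z‖ := by
  have h := Complex.norm_mul_exp_arg_mul_I z
  have ha : (‖z‖ : ℂ) ≠ 0 := by
    simpa using norm_ne_zero_iff.mpr hz
  field_simp [ha]
  linear_combination h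

lemma arg_eq_of (z : ℂ) (hz : z ≠ 0) (θ : ℝ) (h1 : -π < θ) (h2 : θ ≤ π)
    (h : Complex.exp (θ * Complex.I) = z / ‖z‖) : z.arg = θ := by
  have hne : z / (‖z‖ : ℂ) ≠ 0 :=
    div_ne_zero hz (by simpa using norm_ne_zero_iff.mpr hz)
  have he : Complex.exp ((z.arg - θ : ℝ) * Complex.I) = 1 := by
    push_cast
    rw [sub_mul, Complex.exp_sub, exp_arg_mul_I z hz, h, div_self hne]
  have hb : |z.arg - θ| < 2 * π := by
    have := Complex.neg_pi_lt_arg z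
    have := Complex.arg_le_pi z
    rw [abs_lt]; constructor <;> linarith
  have := two_pi_int_zero _ he hb
  linarith

lemma arg_div_eq_sub (z w : ℂ) (hz : 0 < z.re) (hw : 0 < w.re) :
    (w / z).arg = w.arg - z.arg := by
  have hz0 : z ≠ 0 := fun h => by simp [h] at hz
  have hw0 : w ≠ 0 := fun h => by simp [h] at hw
  have hzd : w / z ≠ 0 := div_ne_zero hw0 hz0
  have haz := Complex.abs_arg_lt_pi_div_two_iff.mpr (Or.inl hz)
  have haw := Complex.abs_arg_lt_pi_div_two_iff.mpr (Or.inl hw)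
  rw [abs_lt] at haz haw
  apply arg_eq_of _ hzd
  · have := Real.pi_pos; linarith
  · linarith
  · push_cast
    rw [sub_mul, Complex.exp_sub, exp_arg_mul_I w hw0, exp_arg_mul_I z hz0,
      norm_div, div_div_div_comm, Complex.ofReal_div]

/-- total angle around a small square is zero -/
lemma square_sum_zero (z1 z2 z3 z4 : ℂ) (h1 : z1 ≠ 0) (h2 : z2 ≠ 0) (h3 : z3 ≠ 0) (h4 : z4 ≠ 0)
    (a12 : |(z2 / z1).arg| < π / 2) (a23 : |(z3 / z2).arg| < π / 2)
    (a34 : |(z4 / z3).arg| < π / 2) (a41 : |(z1 / z4).arg| < π / 2) :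
    (z2 / z1).arg + (z3 / z2).arg + (z4 / z3).arg + (z1 / z4).arg = 0 := by
  set S := (z2 / z1).arg + (z3 / z2).arg + (z4 / z3).arg + (z1 / z4).arg with hS
  have hd12 : z2 / z1 ≠ 0 := div_ne_zero h2 h1
  have hd23 : z3 / z2 ≠ 0 := div_ne_zero h3 h2
  have hd34 : z4 / z3 ≠ 0 := div_ne_zero h4 h3
  have hd41 : z1 / z4 ≠ 0 := div_ne_zero h1 h4
  apply two_pi_int_zero
  · have : ((S : ℝ) : ℂ) * Complex.I =
        ((z2/z1).arg : ℂ) * Complex.I + ((z3/z2).arg : ℂ) * Complex.I +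
        ((z4/z3).arg : ℂ) * Complex.I + ((z1/z4).arg : ℂ) * Complex.I := by
      push_cast [hS]; ring
    rw [this, Complex.exp_add, Complex.exp_add, Complex.exp_add,
      exp_arg_mul_I _ hd12, exp_arg_mul_I _ hd23, exp_arg_mul_I _ hd34, exp_arg_mul_I _ hd41]
    have hnum : (z2/z1) * (z3/z2) * (z4/z3) * (z1/z4) = 1 := by
      field_simp
    have habs : ‖z2/z1‖ * (‖z3/z2‖ * (‖z4/z3‖ *
        ‖z1/z4‖)) = 1 := by
      rw [← norm_mul, ← norm_mul, ← norm_mul]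
      rw [show z2/z1 * (z3/z2 * (z4/z3 * (z1/z4))) = (z2/z1) * (z3/z2) * (z4/z3) * (z1/z4) by ring,
        hnum, norm_one]
    rw [div_mul_div_comm, div_mul_div_comm, div_mul_div_comm]
    rw [show z2/z1 * (z3/z2) * (z4/z3) * (z1/z4) = 1 from hnum]
    rw [show ((‖z2/z1‖ :ℂ)) * (‖z3/z2‖) * (‖z4/z3‖) * (‖z1/z4‖) = ((‖z2/z1‖ * (‖z3/z2‖ * (‖z4/z3‖ * ‖z1/z4‖)) : ℝ) : ℂ) by push_cast; ring]
    rw [habs]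
    simp
  · calc |S| ≤ |(z2 / z1).arg + (z3 / z2).arg + (z4 / z3).arg| + |(z1 / z4).arg| := by
          rw [hS]; exact abs_add_le _ _
      _ ≤ |(z2 / z1).arg + (z3 / z2).arg| + |(z4 / z3).arg| + |(z1 / z4).arg| := by
          gcongr; exact abs_add_le _ _
      _ ≤ |(z2 / z1).arg| + |(z3 / z2).arg| + |(z4 / z3).arg| + |(z1 / z4).arg| := by
          gcongr; exact abs_add_le _ _
      _ < π/2 + π/2 + π/2 + π/2 := by gcongr
      _ = 2 * π := by ring

lemma arg_div_antisymm (z w : ℂ) (h : |(w / z).arg| < π / 2) :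
    (z / w).arg = -(w / z).arg := by
  rw [show z / w = (w / z)⁻¹ by rw [inv_div]]
  rw [Complex.arg_inv]
  have := Real.pi_pos
  rw [abs_lt] at h
  rw [if_neg]
  intro he
  rw [he] at h
  linarith [h.2]

lemma halfplane_telescope (q : ℕ → ℂ) (N : ℕ) (h : ∀ j ≤ N, 0 < (q j).re) :
    ∑ j ∈ Finset.range N, (q (j+1) / q j).arg = (q N).arg - (q 0).arg := by
  have hc : ∀ j ∈ Finset.range N, (q (j+1) / q j).arg = (q (j+1)).arg - (q j).arg := by
    intro j hj
    rw [Finset.mem_range] at hj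
    exact arg_div_eq_sub _ _ (h j (by omega)) (h (j+1) (by omega))
  rw [Finset.sum_congr rfl hc]
  exact Finset.sum_range_sub (fun j => (q j).arg) N

lemma exp_pi_div_two_mul_I : Complex.exp ((π/2 : ℝ) * Complex.I) = Complex.I := by
  push_cast
  rw [Complex.exp_mul_I]
  simp

lemma arg_I_mul (z : ℂ) (hz : z ≠ 0) (h : z.arg ≤ π / 2) :
    (Complex.I * z).arg = z.arg + π / 2 := by
  have := Real.pi_pos
  have hzI : Complex.I * z ≠ 0 := mul_ne_zero Complex.I_ne_zero hz
  apply arg_eq_of _ hzI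
  · linarith [Complex.neg_pi_lt_arg z]
  · linarith
  · push_cast
    rw [add_mul, Complex.exp_add, exp_arg_mul_I z hz,
      show ((π:ℂ)/2 * Complex.I) = ((π/2 : ℝ) : ℂ) * Complex.I by push_cast; ring,
      _root_.exp_pi_div_two_mul_I]
    rw [norm_mul, Complex.norm_I, one_mul]
    ring

lemma arg_neg_I_mul (z : ℂ) (hz : z ≠ 0) (h : -(π / 2) < z.arg) :
    (-Complex.I * z).arg = z.arg - π / 2 := by
  have := Real.pi_pos
  have hzI : -Complex.I * z ≠ 0 := mul_ne_zero (neg_ne_zero.mpr Complex.I_ne_zero) hz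
  apply arg_eq_of _ hzI
  · linarith
  · linarith [Complex.arg_le_pi z]
  · push_cast
    rw [sub_mul, Complex.exp_sub, exp_arg_mul_I z hz,
      show ((π:ℂ)/2 * Complex.I) = ((π/2 : ℝ) : ℂ) * Complex.I by push_cast; ring,
      _root_.exp_pi_div_two_mul_I]
    rw [norm_mul, norm_neg, Complex.norm_I, one_mul]
    rw [div_div, div_eq_div_iff (by simp [norm_ne_zero_iff.mpr hz, Complex.I_ne_zero]) (by simpa using norm_ne_zero_iff.mpr hz)]
    ring_nf
    rw [Complex.I_sq]
    ring

lemma ratio_halfplane (z w : ℂ) (m : ℝ) (hm : 0 < m) (hz : m ≤ ‖z‖)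
    (hd : ‖w - z‖ < m / 2) : 0 < (w / z).re ∧ |(w / z).arg| < π / 2 := by
  have hz0 : z ≠ 0 := by
    intro h; rw [h] at hz; simp at hz; linarith
  have hre : 0 < (w / z).re := by
    rw [Complex.div_re]
    have hnormSq : 0 < Complex.normSq z := Complex.normSq_pos.mpr hz0
    rw [← add_div]
    apply div_pos _ hnormSq
    have ha : ‖w - z‖ ^ 2 = (w.re - z.re)^2 + (w.im - z.im)^2 := by
      rw [Complex.sq_norm, Complex.normSq_apply]; simp; ring
    have hb : ‖z‖ ^ 2 = z.re^2 + z.im^2 := by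
      rw [Complex.sq_norm, Complex.normSq_apply]; ring
    have h1 : (w.re - z.re)^2 + (w.im - z.im)^2 < (m/2)^2 := by
      rw [← ha]
      have : (0:ℝ) ≤ ‖w - z‖ := norm_nonneg _
      nlinarith
    have h2 : m^2 ≤ z.re^2 + z.im^2 := by
      rw [← hb]
      nlinarith [norm_nonneg z]
    nlinarith [sq_nonneg (z.re * (w.im - z.im) - z.im * (w.re - z.re)),
      sq_nonneg (z.re^2 + z.im^2 + (z.re * (w.re - z.re) + z.im * (w.im - z.im))),
      sq_nonneg (z.re * (w.re - z.re) + z.im * (w.im - z.im))]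
  exact ⟨hre, Complex.abs_arg_lt_pi_div_two_iff.mpr (Or.inl hre)⟩

lemma miranda (F : ℝ → ℝ → ℂ)
    (hF : ContinuousOn (fun p : ℝ × ℝ => F p.1 p.2) (Icc 0 1 ×ˢ Icc 0 1))
    (hne : ∀ s ∈ Icc (0:ℝ) 1, ∀ t ∈ Icc (0:ℝ) 1, F s t ≠ 0)
    (hleft : ∀ t ∈ Icc (0:ℝ) 1, (F 0 t).re < 0)
    (hright : ∀ t ∈ Icc (0:ℝ) 1, 0 < (F 1 t).re)
    (hbot : ∀ s ∈ Icc (0:ℝ) 1, 0 < (F s 0).im)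
    (htop : ∀ s ∈ Icc (0:ℝ) 1, (F s 1).im < 0) : False := by
  have pi_pos := Real.pi_pos
  set sq : Set (ℝ × ℝ) := Icc 0 1 ×ˢ Icc 0 1 with hsq_def
  have hsqc : IsCompact sq := (isCompact_Icc).prod isCompact_Icc
  have hmem : ∀ p : ℝ × ℝ, p ∈ sq ↔ p.1 ∈ Icc (0:ℝ) 1 ∧ p.2 ∈ Icc (0:ℝ) 1 := by
    intro p; simp [hsq_def, Set.mem_prod, Prod.le_def, Set.mem_Icc]
    tauto
  have h00 : ((0:ℝ), (0:ℝ)) ∈ sq := by rw [hmem]; constructor <;> exact ⟨le_refl 0, by norm_num⟩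
  -- minimum of |F|
  obtain ⟨u0, hu0, hminOn⟩ := hsqc.exists_isMinOn ⟨_, h00⟩
    ((continuous_norm.comp_continuousOn hF))
  set m : ℝ := ‖F u0.1 u0.2‖ with hm_def
  have hm : 0 < m := by
    have := hne u0.1 ((hmem u0).mp hu0).1 u0.2 ((hmem u0).mp hu0).2
    simpa [hm_def] using norm_pos_iff.mpr this
  have hmle : ∀ p ∈ sq, m ≤ ‖F p.1 p.2‖ := fun p hp => hminOn hp
  -- uniform continuity
  have huc := hsqc.uniformContinuousOn_of_continuous hF
  rw [Metric.uniformContinuousOn_iff] at huc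
  obtain ⟨δ, hδ, hucd⟩ := huc (m/2) (by positivity)
  -- grid size
  obtain ⟨n0, hn0⟩ := exists_nat_one_div_lt hδ
  set n : ℕ := n0 + 1 with hn_def
  have hn1 : 1 ≤ n := by omega
  have hnpos : (0:ℝ) < n := by positivity
  have hstep : (1:ℝ)/n < δ := by
    have : ((n0:ℝ) + 1) = (n:ℝ) := by push_cast [hn_def]; ring
    rwa [this] at hn0
  -- grid points
  set P : ℕ → ℕ → ℂ := fun i j => F (i/n) (j/n) with hP_def
  have hgrid : ∀ i : ℕ, i ≤ n → ((i:ℝ)/n) ∈ Icc (0:ℝ) 1 := by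
    intro i hi
    constructor
    · positivity
    · rw [div_le_one hnpos]; exact_mod_cast hi
  have hPmem : ∀ i j : ℕ, i ≤ n → j ≤ n → ((i:ℝ)/n, (j:ℝ)/n) ∈ sq := by
    intro i j hi hj; rw [hmem]; exact ⟨hgrid i hi, hgrid j hj⟩
  have hPne : ∀ i j : ℕ, i ≤ n → j ≤ n → P i j ≠ 0 := by
    intro i j hi hj
    exact hne _ (hgrid i hi) _ (hgrid j hj)
  -- adjacency
  have hadj : ∀ i j i' j' : ℕ, i ≤ n → j ≤ n → i' ≤ n → j' ≤ n →
      |(i:ℝ) - i'| ≤ 1 → |(j:ℝ) - j'| ≤ 1 →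
      0 < (P i' j' / P i j).re ∧ |(P i' j' / P i j).arg| < π/2 := by
    intro i j i' j' hi hj hi' hj' hii hjj
    apply ratio_halfplane _ _ m hm (hmle _ (hPmem i j hi hj))
    have hdist : dist ((i':ℝ)/n, (j':ℝ)/n) ((i:ℝ)/n, (j:ℝ)/n) < δ := by
      rw [Prod.dist_eq]
      apply max_lt
      · rw [Real.dist_eq, div_sub_div_same, abs_div, abs_of_pos hnpos]
        refine lt_of_le_of_lt ?_ hstep
        gcongr
        rw [abs_sub_comm]; exact hii
      · rw [Real.dist_eq, div_sub_div_same, abs_div, abs_of_pos hnpos]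
        refine lt_of_le_of_lt ?_ hstep
        gcongr
        rw [abs_sub_comm]; exact hjj
    have := hucd _ (hPmem i' j' hi' hj') _ (hPmem i j hi hj) hdist
    rwa [Complex.dist_eq] at this
  -- helpers for adjacency offsets
  have hone : ∀ k : ℕ, |(k:ℝ) - ((k+1:ℕ):ℝ)| ≤ 1 := by
    intro k; push_cast; rw [show (k:ℝ) - (k+1) = -1 by ring]; norm_num
  have hone' : ∀ k : ℕ, |(((k+1:ℕ)):ℝ) - (k:ℝ)| ≤ 1 := by
    intro k; push_cast; rw [show (k:ℝ)+1 - k = 1 by ring]; norm_num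
  have hzero : ∀ k : ℕ, |(k:ℝ) - (k:ℝ)| ≤ 1 := by intro k; simp
  -- square identity
  have hsqid : ∀ i, i < n → ∀ j, j < n →
      (P (i+1) j / P i j).arg + (P (i+1) (j+1) / P (i+1) j).arg
        = (P i (j+1) / P i j).arg + (P (i+1) (j+1) / P i (j+1)).arg := by
    intro i hi j hj
    have h12 := hadj i j (i+1) j (by omega) (by omega) (by omega) (by omega) (hone i) (hzero j)
    have h23 := hadj (i+1) j (i+1) (j+1) (by omega) (by omega) (by omega) (by omega)
      (hzero (i+1)) (hone j)
    have h34 := hadj (i+1) (j+1) i (j+1) (by omega) (by omega) (by omega) (by omega)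
      (hone' i) (hzero (j+1))
    have h41 := hadj i (j+1) i j (by omega) (by omega) (by omega) (by omega)
      (hzero i) (hone' j)
    have hz := square_sum_zero (P i j) (P (i+1) j) (P (i+1) (j+1)) (P i (j+1))
      (hPne i j (by omega) (by omega)) (hPne (i+1) j (by omega) (by omega))
      (hPne (i+1) (j+1) (by omega) (by omega)) (hPne i (j+1) (by omega) (by omega))
      h12.2 h23.2 h34.2 h41.2
    have e1 := arg_div_antisymm (P (i+1) (j+1)) (P i (j+1)) h34.2
    have e2 := arg_div_antisymm (P i (j+1)) (P i j) h41.2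
    linarith
  -- row sums
  set g : ℕ → ℝ := fun j => ∑ i ∈ Finset.range n, (P (i+1) j / P i j).arg with hg_def
  have hrow : ∀ j, j < n → g (j+1) - g j
      = (P n (j+1) / P n j).arg - (P 0 (j+1) / P 0 j).arg := by
    intro j hj
    have : g (j+1) - g j = ∑ i ∈ Finset.range n,
        ((P (i+1) (j+1) / P (i+1) j).arg - (P i (j+1) / P i j).arg) := by
      rw [hg_def]
      simp only []
      rw [← Finset.sum_sub_distrib]
      apply Finset.sum_congr rfl
      intro i hi
      rw [Finset.mem_range] at hi
      linarith [hsqid i hi j hj]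
    rw [this]
    exact Finset.sum_range_sub (fun i => (P i (j+1) / P i j).arg) n
  -- telescoping over rows
  have htot : g n - g 0 = (∑ j ∈ Finset.range n, (P n (j+1) / P n j).arg)
      - (∑ j ∈ Finset.range n, (P 0 (j+1) / P 0 j).arg) := by
    have h1 := Finset.sum_range_sub g n
    have h2 : ∑ j ∈ Finset.range n, (g (j+1) - g j)
        = ∑ j ∈ Finset.range n, ((P n (j+1) / P n j).arg - (P 0 (j+1) / P 0 j).arg) := by
      apply Finset.sum_congr rfl
      intro j hj
      rw [Finset.mem_range] at hj
      exact hrow j hj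
    rw [← h1, h2, Finset.sum_sub_distrib]
  -- evaluate the four boundary sums
  have hnn : ((n:ℝ))/n = 1 := div_self (ne_of_gt hnpos)
  have h0n : ((0:ℕ):ℝ)/n = 0 := by simp
  -- right column
  have hcolR : ∑ j ∈ Finset.range n, (P n (j+1) / P n j).arg
      = (P n n).arg - (P n 0).arg := by
    apply halfplane_telescope (fun j => P n j) n
    intro j hj
    show 0 < (F ((n:ℝ)/n) ((j:ℝ)/n)).re
    rw [hnn]
    exact hright _ (hgrid j hj)
  -- left column
  have hcolL : ∑ j ∈ Finset.range n, (P 0 (j+1) / P 0 j).arg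
      = (-(P 0 n)).arg - (-(P 0 0)).arg := by
    have := halfplane_telescope (fun j => -(P 0 j)) n ?side0
    · rw [← this]
      apply Finset.sum_congr rfl
      intro j hj
      rw [neg_div_neg_eq]
    · intro j hj
      show 0 < (-(F (((0:ℕ):ℝ)/(n:ℝ)) ((j:ℝ)/n))).re
      rw [Complex.neg_re, h0n]
      have := hleft _ (hgrid j hj)
      linarith
  -- bottom row
  have hIne : (Complex.I : ℂ) ≠ 0 := Complex.I_ne_zero
  have hnIne : (-Complex.I : ℂ) ≠ 0 := neg_ne_zero.mpr Complex.I_ne_zero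
  have hrow0 : g 0 = (-Complex.I * P n 0).arg - (-Complex.I * P 0 0).arg := by
    have := halfplane_telescope (fun i => -Complex.I * P i 0) n ?side1
    · rw [← this, hg_def]
      apply Finset.sum_congr rfl
      intro i hi
      rw [mul_div_mul_left _ _ hnIne]
    · intro i hi
      show 0 < (-Complex.I * F ((i:ℝ)/n) (((0:ℕ):ℝ)/n)).re
      rw [show ((-Complex.I * F ((i:ℝ)/n) (((0:ℕ):ℝ)/n)).re) = (F ((i:ℝ)/n) (((0:ℕ):ℝ)/n)).im by
        simp [Complex.mul_re]]
      rw [h0n]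
      exact hbot _ (hgrid i hi)
  have hrowN : g n = (Complex.I * P n n).arg - (Complex.I * P 0 n).arg := by
    have := halfplane_telescope (fun i => Complex.I * P i n) n ?side2
    · rw [← this, hg_def]
      apply Finset.sum_congr rfl
      intro i hi
      rw [mul_div_mul_left _ _ hIne]
    · intro i hi
      show 0 < (Complex.I * F ((i:ℝ)/n) ((n:ℝ)/n)).re
      rw [show ((Complex.I * F ((i:ℝ)/n) ((n:ℝ)/n)).re) = -(F ((i:ℝ)/n) ((n:ℝ)/n)).im by
        simp [Complex.mul_re]]
      rw [hnn]
      have := htop _ (hgrid i hi)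
      linarith
  -- corners
  have mem0 : (0:ℝ) ∈ Icc (0:ℝ) 1 := by norm_num
  have mem1 : (1:ℝ) ∈ Icc (0:ℝ) 1 := by norm_num
  set A := P 0 0 with hA
  set B := P n 0 with hB
  set C := P 0 n with hC
  set D := P n n with hD
  have hAre : A.re < 0 := by
    show (F (((0:ℕ):ℝ)/n) (((0:ℕ):ℝ)/n)).re < 0
    rw [h0n]; exact hleft _ mem0
  have hAim : 0 < A.im := by
    show 0 < (F (((0:ℕ):ℝ)/n) (((0:ℕ):ℝ)/n)).im
    rw [h0n]; exact hbot _ mem0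
  have hBre : 0 < B.re := by
    show 0 < (F ((n:ℝ)/n) (((0:ℕ):ℝ)/n)).re
    rw [hnn]; exact hright _ (hgrid 0 (by omega))
  have hCre : C.re < 0 := by
    show (F (((0:ℕ):ℝ)/n) ((n:ℝ)/n)).re < 0
    rw [h0n]; exact hleft _ (hgrid n (le_refl n))
  have hCim : C.im < 0 := by
    show (F (((0:ℕ):ℝ)/n) ((n:ℝ)/n)).im < 0
    rw [hnn]; exact htop _ (hgrid 0 (by omega))
  have hDre : 0 < D.re := by
    show 0 < (F ((n:ℝ)/n) ((n:ℝ)/n)).re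
    rw [hnn]; exact hright _ mem1
  have hDim : D.im < 0 := by
    show (F ((n:ℝ)/n) ((n:ℝ)/n)).im < 0
    rw [hnn]; exact htop _ mem1
  have hBim : 0 < B.im := by
    show 0 < (F ((n:ℝ)/n) (((0:ℕ):ℝ)/n)).im
    rw [h0n]; exact hbot _ (hgrid n (le_refl n))
  have hA0 : A ≠ 0 := fun h => by rw [h] at hAim; simp at hAim
  have hB0 : B ≠ 0 := fun h => by rw [h] at hBre; simp at hBre
  have hC0 : C ≠ 0 := fun h => by rw [h] at hCre; simp at hCre
  have hD0 : D ≠ 0 := fun h => by rw [h] at hDre; simp at hDre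
  -- arg facts
  have hargB : |B.arg| < π/2 := Complex.abs_arg_lt_pi_div_two_iff.mpr (Or.inl hBre)
  have hargD : |D.arg| < π/2 := Complex.abs_arg_lt_pi_div_two_iff.mpr (Or.inl hDre)
  rw [abs_lt] at hargB hargD
  have hargA_pos : 0 < A.arg := by
    rcases lt_or_eq_of_le (Complex.arg_nonneg_iff.mpr hAim.le) with h | h
    · exact h
    · exfalso
      have := Complex.arg_eq_zero_iff.mp h.symm
      rw [this.2] at hAim
      exact lt_irrefl _ hAim
  have hargA_le : A.arg ≤ π := Complex.arg_le_pi A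
  have hargC_neg : C.arg < 0 := Complex.arg_neg_iff.mpr hCim
  have hargC_gt : -π < C.arg := Complex.neg_pi_lt_arg C
  -- rotations
  have eID : (Complex.I * D).arg = D.arg + π/2 := arg_I_mul D hD0 (by linarith [hargD.2])
  have eIC : (Complex.I * C).arg = C.arg + π/2 := arg_I_mul C hC0 (by linarith)
  have enIB : (-Complex.I * B).arg = B.arg - π/2 := arg_neg_I_mul B hB0 (by linarith [hargB.1])
  have enIA : (-Complex.I * A).arg = A.arg - π/2 := arg_neg_I_mul A hA0 (by linarith)
  have enC : (-C).arg = C.arg + π := Complex.arg_neg_eq_arg_add_pi_of_im_neg hCim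
  have enA : (-A).arg = A.arg - π := Complex.arg_neg_eq_arg_sub_pi_of_im_pos hAim
  -- final contradiction
  rw [hcolR, hcolL] at htot
  rw [hrow0, hrowN] at htot
  rw [eID, eIC, enIB, enIA] at htot
  rw [enC, enA] at htot
  linarith

lemma thickening_connected' {E : Type*} [NormedAddCommGroup E] [NormedSpace ℝ E]
    (K : Set E) (hK : IsConnected K) (δ : ℝ) (hδ : 0 < δ) :
    IsConnected (Metric.thickening δ K) := by
  obtain ⟨p0, hp0⟩ := hK.nonempty
  constructor
  · exact ⟨p0, Metric.self_subset_thickening hδ K hp0⟩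
  · have hU : Metric.thickening δ K = ⋃₀ ((fun p => K ∪ Metric.ball p δ) '' K) := by
      rw [Metric.thickening_eq_biUnion_ball]
      ext q
      simp only [Set.mem_iUnion, Set.sUnion_image, Set.mem_union]
      constructor
      · rintro ⟨x, hx, hq⟩
        exact ⟨x, hx, Or.inr hq⟩
      · rintro ⟨x, hx, hq | hq⟩
        · exact ⟨q, hq, Metric.mem_ball_self hδ⟩
        · exact ⟨x, hx, hq⟩
    rw [hU]
    apply isPreconnected_sUnion p0
    · rintro s ⟨p, hp, rfl⟩
      exact Or.inl hp0
    · rintro s ⟨p, hp, rfl⟩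
      exact IsPreconnected.union p hp (Metric.mem_ball_self hδ) hK.isPreconnected
        (convex_ball p δ).isPreconnected

noncomputable def mkE (x y : ℝ) : EuclideanSpace ℝ (Fin 2) :=
  (WithLp.equiv 2 (Fin 2 → ℝ)).symm ![x, y]

noncomputable def segPath (a b : EuclideanSpace ℝ (Fin 2)) : Path a b where
  toFun := fun t => (1 - (t:ℝ)) • a + (t:ℝ) • b
  continuous_toFun := by continuity
  source' := by simp
  target' := by simp

noncomputable def toC (w : EuclideanSpace ℝ (Fin 2)) : ℂ := (w 0 : ℂ) + (w 1 : ℂ) * Complex.I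

lemma coord_dist (p q : EuclideanSpace ℝ (Fin 2)) (i : Fin 2) : |p i - q i| ≤ dist p q := by
  rw [EuclideanSpace.dist_eq]
  rw [show |p i - q i| = Real.sqrt (dist (p i) (q i) ^ 2) by
    rw [Real.sqrt_sq_eq_abs, Real.dist_eq, _root_.abs_abs]]
  apply Real.sqrt_le_sqrt
  exact Finset.single_le_sum (f := fun j => dist (p j) (q j) ^ 2)
    (fun j _ => sq_nonneg _) (Finset.mem_univ i)

lemma toC_cont : Continuous toC :=
  (Complex.continuous_ofReal.comp ((continuous_apply 0).comp (PiLp.continuous_ofLp 2 _))).add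
    ((Complex.continuous_ofReal.comp ((continuous_apply 1).comp (PiLp.continuous_ofLp 2 _))).mul continuous_const)

@[simp] lemma toC_re (w : EuclideanSpace ℝ (Fin 2)) : (toC w).re = w 0 := by simp [toC]
@[simp] lemma toC_im (w : EuclideanSpace ℝ (Fin 2)) : (toC w).im = w 1 := by simp [toC]

lemma toC_inj (z w : EuclideanSpace ℝ (Fin 2)) (h : toC z = toC w) : z = w := by
  have h0 : z 0 = w 0 := by have := congrArg Complex.re h; simpa using this
  have h1 : z 1 = w 1 := by have := congrArg Complex.im h; simpa using this
  ext i
  fin_cases i <;> assumption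

set_option maxHeartbeats 1000000 in
/-- Any continuous path avoiding a nonempty compact connected set `K` that goes from
strictly left of `K`'s bounding box to strictly right of it must, at some moment whose
`x`-coordinate lies within the box's horizontal range, be at or above the top of the box
or at or below its bottom. -/
theorem path_avoiding_compact_passes_over_or_under
    (K : Set (EuclideanSpace ℝ (Fin 2)))
    (hne : K.Nonempty) (hcpt : IsCompact K) (hconn : IsConnected K)
    (xlo xhi ylo yhi : ℝ)
    (hxlo : xlo = sInf ((fun p : EuclideanSpace ℝ (Fin 2) => p 0) '' K))
    (hxhi : xhi = sSup ((fun p : EuclideanSpace ℝ (Fin 2) => p 0) '' K))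
    (hylo : ylo = sInf ((fun p : EuclideanSpace ℝ (Fin 2) => p 1) '' K))
    (hyhi : yhi = sSup ((fun p : EuclideanSpace ℝ (Fin 2) => p 1) '' K))
    (γ : ℝ → EuclideanSpace ℝ (Fin 2))
    (hγ : ContinuousOn γ (Set.Icc 0 1))
    (hdisj : ∀ τ ∈ Set.Icc (0 : ℝ) 1, γ τ ∉ K)
    (h0 : γ 0 0 < xlo) (h1 : xhi < γ 1 0) :
    ∃ τ ∈ Set.Icc (0 : ℝ) 1,
      xlo ≤ γ τ 0 ∧ γ τ 0 ≤ xhi ∧ (yhi ≤ γ τ 1 ∨ γ τ 1 ≤ ylo) := by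
  by_contra hcon
  push_neg at hcon
  -- basic facts about the bounding box
  have hcont0 : Continuous (fun p : EuclideanSpace ℝ (Fin 2) => p 0) := (continuous_apply 0).comp (PiLp.continuous_ofLp 2 _)
  have hcont1 : Continuous (fun p : EuclideanSpace ℝ (Fin 2) => p 1) := (continuous_apply 1).comp (PiLp.continuous_ofLp 2 _)
  have hXc : IsCompact ((fun p : EuclideanSpace ℝ (Fin 2) => p 0) '' K) := hcpt.image hcont0
  have hYc : IsCompact ((fun p : EuclideanSpace ℝ (Fin 2) => p 1) '' K) := hcpt.image hcont1
  have hxlo_le : ∀ p ∈ K, xlo ≤ p 0 := by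
    intro p hp
    rw [hxlo]
    exact csInf_le hXc.bddBelow ⟨p, hp, rfl⟩
  have hxhi_ge : ∀ p ∈ K, p 0 ≤ xhi := by
    intro p hp
    rw [hxhi]
    exact le_csSup hXc.bddAbove ⟨p, hp, rfl⟩
  have hylo_le : ∀ p ∈ K, ylo ≤ p 1 := by
    intro p hp
    rw [hylo]
    exact csInf_le hYc.bddBelow ⟨p, hp, rfl⟩
  have hyhi_ge : ∀ p ∈ K, p 1 ≤ yhi := by
    intro p hp
    rw [hyhi]
    exact le_csSup hYc.bddAbove ⟨p, hp, rfl⟩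
  obtain ⟨pK, hpK⟩ := id hne
  have hxlo_xhi : xlo ≤ xhi := le_trans (hxlo_le pK hpK) (hxhi_ge pK hpK)
  obtain ⟨ptop, hptopK, hptop⟩ : ∃ p ∈ K, p 1 = yhi := by
    have h := hYc.sSup_mem (hne.image _)
    rw [← hyhi] at h
    obtain ⟨p, hp, hpe⟩ := h
    exact ⟨p, hp, hpe⟩
  obtain ⟨pbot, hpbotK, hpbot⟩ : ∃ p ∈ K, p 1 = ylo := by
    have h := hYc.sInf_mem (hne.image _)
    rw [← hylo] at h
    obtain ⟨p, hp, hpe⟩ := h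
    exact ⟨p, hp, hpe⟩
  -- crop the path to a crossing of the widened strip
  set f : ℝ → ℝ := fun t => γ t 0 with hf_def
  have hfc : ContinuousOn f (Icc 0 1) := hcont0.comp_continuousOn hγ
  set d2 : ℝ := min (xlo - γ 0 0) (γ 1 0 - xhi) / 2 with hd2_def
  have hd2 : 0 < d2 := by
    apply div_pos _ (by norm_num)
    apply lt_min <;> linarith
  set L : ℝ := xlo - d2 with hL_def
  set R : ℝ := xhi + d2 with hR_def
  have hγ0L : f 0 < L := by
    have := min_le_left (xlo - γ 0 0) (γ 1 0 - xhi)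
    simp only [hL_def, hd2_def, hf_def]
    linarith
  have hRγ1 : R < f 1 := by
    have := min_le_right (xlo - γ 0 0) (γ 1 0 - xhi)
    simp only [hR_def, hd2_def, hf_def]
    linarith
  have hLxlo : L < xlo := by simp only [hL_def]; linarith
  have hxhiR : xhi < R := by simp only [hR_def]; linarith
  have hLR : L < R := by linarith
  -- first hitting time of R
  set S1 : Set ℝ := Icc 0 1 ∩ f ⁻¹' (Ici R) with hS1_def
  have hS1c : IsClosed S1 := hfc.preimage_isClosed_of_isClosed isClosed_Icc isClosed_Ici
  have hS1ne : S1.Nonempty := ⟨1, ⟨by norm_num, le_refl 1⟩, le_of_lt hRγ1⟩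
  have hS1bdd : BddBelow S1 := ⟨0, fun t ht => ht.1.1⟩
  set t1 : ℝ := sInf S1 with ht1_def
  have ht1S : t1 ∈ S1 := hS1c.csInf_mem hS1ne hS1bdd
  have ht1mem : t1 ∈ Icc (0:ℝ) 1 := ht1S.1
  have hft1R : R ≤ f t1 := ht1S.2
  have ht1min : ∀ t ∈ S1, t1 ≤ t := fun t ht => csInf_le hS1bdd ht
  have hflt : ∀ t, 0 ≤ t → t < t1 → f t < R := by
    intro t h0t htt1
    by_contra hge
    push_neg at hge
    have : t ∈ S1 := ⟨⟨h0t, le_trans (le_of_lt htt1) ht1mem.2⟩, hge⟩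
    exact absurd (ht1min t this) (not_le.mpr htt1)
  have hft1 : f t1 = R := by
    have hsub : Icc (0:ℝ) t1 ⊆ Icc 0 1 := Icc_subset_Icc (le_refl 0) ht1mem.2
    have hivt := intermediate_value_Icc ht1mem.1 (hfc.mono hsub)
    have hRmem : R ∈ Icc (f 0) (f t1) := ⟨by linarith, hft1R⟩
    obtain ⟨t', ht', hft'⟩ := hivt hRmem
    have ht'S : t' ∈ S1 := ⟨⟨ht'.1, le_trans ht'.2 ht1mem.2⟩, le_of_eq hft'.symm⟩
    have := le_antisymm ht'.2 (ht1min t' ht'S)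
    rw [← this]
    exact hft'
  -- last exit time from L before t1
  set S0 : Set ℝ := Icc 0 t1 ∩ f ⁻¹' (Iic L) with hS0_def
  have hS0c : IsClosed S0 :=
    (hfc.mono (Icc_subset_Icc (le_refl 0) ht1mem.2)).preimage_isClosed_of_isClosed
      isClosed_Icc isClosed_Iic
  have hS0ne : S0.Nonempty := ⟨0, ⟨le_refl 0, ht1mem.1⟩, le_of_lt hγ0L⟩
  have hS0bdd : BddAbove S0 := ⟨t1, fun t ht => ht.1.2⟩
  set t0 : ℝ := sSup S0 with ht0_def
  have ht0S : t0 ∈ S0 := hS0c.csSup_mem hS0ne hS0bdd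
  have ht0mem : t0 ∈ Icc (0:ℝ) t1 := ht0S.1
  have hft0L : f t0 ≤ L := ht0S.2
  have ht0max : ∀ t ∈ S0, t ≤ t0 := fun t ht => le_csSup hS0bdd ht
  have hfgt : ∀ t, t0 < t → t ≤ t1 → L < f t := by
    intro t ht0t htt1
    by_contra hle
    push_neg at hle
    have : t ∈ S0 := ⟨⟨le_trans ht0mem.1 (le_of_lt ht0t), htt1⟩, hle⟩
    exact absurd (ht0max t this) (not_le.mpr ht0t)
  have hft0 : f t0 = L := by
    have hsub : Icc t0 t1 ⊆ Icc 0 1 := Icc_subset_Icc ht0mem.1 ht1mem.2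
    have hivt := intermediate_value_Icc ht0mem.2 (hfc.mono hsub)
    have hLmem : L ∈ Icc (f t0) (f t1) := ⟨hft0L, by linarith⟩
    obtain ⟨t', ht', hft'⟩ := hivt hLmem
    have ht'S : t' ∈ S0 := ⟨⟨le_trans ht0mem.1 ht'.1, ht'.2⟩, le_of_eq hft'⟩
    have heq : t' = t0 := le_antisymm (ht0max t' ht'S) ht'.1
    rw [← heq]
    exact hft'
  have ht01 : t0 < t1 := by
    rcases lt_or_eq_of_le ht0mem.2 with h | h
    · exact h
    · exfalso
      rw [h, hft1] at hft0
      linarith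
  have hsub01 : Icc t0 t1 ⊆ Icc 0 1 := Icc_subset_Icc ht0mem.1 ht1mem.2
  have hrange : ∀ t ∈ Icc t0 t1, L ≤ f t ∧ f t ≤ R := by
    rintro t ⟨htl, htr⟩
    constructor
    · rcases eq_or_lt_of_le htl with h | h
      · rw [← h, hft0]
      · exact le_of_lt (hfgt t h htr)
    · rcases eq_or_lt_of_le htr with h | h
      · rw [h, hft1]
      · exact le_of_lt (hflt t (le_trans ht0mem.1 htl) h)
  have hband : ∀ t ∈ Icc t0 t1, xlo ≤ f t → f t ≤ xhi → ylo < γ t 1 ∧ γ t 1 < yhi := by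
    intro t ht hx1 hx2
    have := hcon t (hsub01 ht) hx1 hx2
    exact ⟨this.2, this.1⟩
  -- the cropped path image and a thickening of K avoiding it
  set Γ : Set (EuclideanSpace ℝ (Fin 2)) := γ '' (Icc t0 t1) with hΓ_def
  have hΓc : IsCompact Γ := isCompact_Icc.image_of_continuousOn (hγ.mono hsub01)
  have hdisjKΓ : Disjoint K Γ := by
    rw [Set.disjoint_right]
    rintro x ⟨t, ht, rfl⟩
    exact hdisj t (hsub01 ht)
  obtain ⟨δ0, hδ0, hthick⟩ := hdisjKΓ.exists_thickenings hcpt hΓc.isClosed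
  set δ : ℝ := min δ0 d2 with hδ_def
  have hδpos : 0 < δ := lt_min hδ0 hd2
  have hδd2 : δ ≤ d2 := min_le_right _ _
  set U : Set (EuclideanSpace ℝ (Fin 2)) := Metric.thickening δ K with hU_def
  have hUopen : IsOpen U := Metric.isOpen_thickening
  have hUK : K ⊆ U := Metric.self_subset_thickening hδpos K
  have hUΓ : ∀ q ∈ U, q ∉ Γ := by
    intro q hq hqΓ
    have hq1 : q ∈ Metric.thickening δ0 K := Metric.thickening_mono (min_le_left _ _) K hq
    have hq2 : q ∈ Metric.thickening δ0 Γ := Metric.self_subset_thickening hδ0 Γ hqΓ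
    exact Set.disjoint_left.mp hthick hq1 hq2
  have hUx : ∀ q ∈ U, L < q 0 ∧ q 0 < R := by
    intro q hq
    rw [hU_def, Metric.mem_thickening_iff] at hq
    obtain ⟨p, hpK', hdist⟩ := hq
    have hc := coord_dist q p 0
    have habs : |q 0 - p 0| < d2 := lt_of_le_of_lt hc (lt_of_lt_of_le hdist hδd2)
    rw [abs_lt] at habs
    have hx1 := hxlo_le p hpK'
    have hx2 := hxhi_ge p hpK'
    constructor
    · simp only [hL_def]; linarith
    · simp only [hR_def]; linarith
  have hUconn : IsConnected U := thickening_connected' K hconn δ hδpos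
  have hUpath : IsPathConnected U := hUopen.isConnected_iff_isPathConnected.mp hUconn
  have hjoin : JoinedIn U pbot ptop := hUpath.joinedIn pbot (hUK hpbotK) ptop (hUK hptopK)
  -- vertical extent of the cropped path
  have hγ1c : ContinuousOn (fun t => γ t 1) (Icc t0 t1) := hcont1.comp_continuousOn (hγ.mono hsub01)
  have hne01 : (Icc t0 t1).Nonempty := ⟨t0, le_refl t0, le_of_lt ht01⟩
  obtain ⟨sm, hsm, hsmmin⟩ := isCompact_Icc.exists_isMinOn hne01 hγ1c
  obtain ⟨sM, hsM, hsMmax⟩ := isCompact_Icc.exists_isMaxOn hne01 hγ1c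
  set Ym : ℝ := min ylo (γ sm 1) - 1 with hYm_def
  set YM : ℝ := max yhi (γ sM 1) + 1 with hYM_def
  have hYmylo : Ym < ylo := by simp only [hYm_def]; have := min_le_left ylo (γ sm 1); linarith
  have hYMyhi : yhi < YM := by simp only [hYM_def]; have := le_max_left yhi (γ sM 1); linarith
  have hYmlow : ∀ t ∈ Icc t0 t1, Ym < γ t 1 := by
    intro t ht
    have h := hsmmin ht
    simp only [hYm_def]
    have := min_le_right ylo (γ sm 1)
    exact lt_of_lt_of_le (by linarith) h
  have hYMhigh : ∀ t ∈ Icc t0 t1, γ t 1 < YM := by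
    intro t ht
    have h := hsMmax ht
    simp only [hYM_def]
    have := le_max_right yhi (γ sM 1)
    exact lt_of_le_of_lt h (by linarith)
  -- the barrier path
  set qbot : EuclideanSpace ℝ (Fin 2) := mkE (pbot 0) Ym with hqbot_def
  set qtop : EuclideanSpace ℝ (Fin 2) := mkE (ptop 0) YM with hqtop_def
  set τp : Path qbot qtop := ((segPath qbot pbot).trans hjoin.somePath).trans (segPath ptop qtop)
    with hτp_def
  set τ : ℝ → EuclideanSpace ℝ (Fin 2) := ⇑τp.extend with hτ_def
  have hτcont : Continuous τ := τp.continuous_extend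
  have hτ0 : τ 0 = qbot := τp.extend_zero
  have hτ1 : τ 1 = qtop := τp.extend_one
  have hτprop : ∀ t : ℝ, (L < τ t 0 ∧ τ t 0 < R) ∧ ∀ s ∈ Icc t0 t1, γ s ≠ τ t := by
    intro t
    have hmemrange : τ t ∈ range (⇑(segPath qbot pbot)) ∪ range (⇑hjoin.somePath)
        ∪ range (⇑(segPath ptop qtop)) := by
      have h1 : τ t ∈ range τp.extend := ⟨t, rfl⟩
      rw [Path.extend_range] at h1
      rw [hτp_def] at h1
      rw [Path.trans_range, Path.trans_range] at h1
      exact h1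
    rcases hmemrange with (⟨r, hr⟩ | ⟨r, hr⟩) | ⟨r, hr⟩
    · -- bottom segment
      have hr0 : τ t 0 = pbot 0 := by
        rw [← hr]
        simp only [segPath, Path.coe_mk_mk, PiLp.add_apply, PiLp.smul_apply, smul_eq_mul,
          hqbot_def, mkE]
        simp
        ring
      have hr1 : τ t 1 = (1 - (r:ℝ)) * Ym + (r:ℝ) * ylo := by
        rw [← hr]
        simp only [segPath, Path.coe_mk_mk, PiLp.add_apply, PiLp.smul_apply, smul_eq_mul,
          hqbot_def, mkE, hpbot]
        simp
      have hx1 := hxlo_le pbot hpbotK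
      have hx2 := hxhi_ge pbot hpbotK
      have hbnd : τ t 1 ≤ ylo := by
        rw [hr1]
        nlinarith [unitInterval.nonneg r, unitInterval.le_one r, hYmylo]
      refine ⟨⟨by rw [hr0]; linarith, by rw [hr0]; linarith⟩, ?_⟩
      intro s hs heq
      have hfs : f s = pbot 0 := by rw [hf_def]; simp only []; rw [heq, hr0]
      have := (hband s hs (by rw [hfs]; exact hx1) (by rw [hfs]; exact hx2)).1
      rw [heq] at this
      linarith
    · -- middle path inside U
      have hU' : τ t ∈ U := by rw [← hr]; exact hjoin.somePath_mem r
      refine ⟨hUx _ hU', ?_⟩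
      intro s hs heq
      exact hUΓ _ hU' (by rw [← heq]; exact ⟨s, hs, rfl⟩)
    · -- top segment
      have hr0 : τ t 0 = ptop 0 := by
        rw [← hr]
        simp only [segPath, Path.coe_mk_mk, PiLp.add_apply, PiLp.smul_apply, smul_eq_mul,
          hqtop_def, mkE]
        simp
        ring
      have hr1 : τ t 1 = (1 - (r:ℝ)) * yhi + (r:ℝ) * YM := by
        rw [← hr]
        simp only [segPath, Path.coe_mk_mk, PiLp.add_apply, PiLp.smul_apply, smul_eq_mul,
          hqtop_def, mkE, hptop]
        simp
      have hx1 := hxlo_le ptop hptopK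
      have hx2 := hxhi_ge ptop hptopK
      have hbnd : yhi ≤ τ t 1 := by
        rw [hr1]
        nlinarith [unitInterval.nonneg r, unitInterval.le_one r, hYMyhi]
      refine ⟨⟨by rw [hr0]; linarith, by rw [hr0]; linarith⟩, ?_⟩
      intro s hs heq
      have hfs : f s = ptop 0 := by rw [hf_def]; simp only []; rw [heq, hr0]
      have := (hband s hs (by rw [hfs]; exact hx1) (by rw [hfs]; exact hx2)).2
      rw [heq] at this
      linarith
  -- set up the Miranda function
  set ℓ : ℝ → ℝ := fun s => t0 + s * (t1 - t0) with hℓ_def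
  have hℓ0 : ℓ 0 = t0 := by simp [hℓ_def]
  have hℓ1 : ℓ 1 = t1 := by simp [hℓ_def]
  have hℓmap : ∀ s ∈ Icc (0:ℝ) 1, ℓ s ∈ Icc t0 t1 := by
    rintro s ⟨hs0, hs1⟩
    constructor
    · simp only [hℓ_def]; nlinarith
    · simp only [hℓ_def]; nlinarith
  apply miranda (fun s t => toC (γ (ℓ s)) - toC (τ t))
  · apply ContinuousOn.sub
    · apply toC_cont.comp_continuousOn
      apply ContinuousOn.comp (hγ.mono hsub01)
      · exact (continuous_const.add (continuous_fst.mul continuous_const)).continuousOn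
      · intro p hp
        exact hℓmap p.1 hp.1
    · exact (toC_cont.comp (hτcont.comp continuous_snd)).continuousOn
  · intro s hs t ht hF0
    rw [sub_eq_zero] at hF0
    exact (hτprop t).2 (ℓ s) (hℓmap s hs) (toC_inj _ _ hF0)
  · intro t ht
    have h := (hτprop t).1.1
    simp only [Complex.sub_re, toC_re]
    rw [hℓ0]
    have : f t0 = L := hft0
    simp only [hf_def] at this
    rw [this]
    linarith
  · intro t ht
    have h := (hτprop t).1.2
    simp only [Complex.sub_re, toC_re]
    rw [hℓ1]
    have : f t1 = R := hft1
    simp only [hf_def] at this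
    rw [this]
    linarith
  · intro s hs
    simp only [Complex.sub_im, toC_im]
    rw [hτ0]
    have hq : qbot 1 = Ym := by simp [hqbot_def, mkE]
    rw [hq]
    have := hYmlow (ℓ s) (hℓmap s hs)
    linarith
  · intro s hs
    simp only [Complex.sub_im, toC_im]
    rw [hτ1]
    have hq : qtop 1 = YM := by simp [hqtop_def, mkE]
    rw [hq]
    have := hYMhigh (ℓ s) (hℓmap s hs)
    linarith
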